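/- In a finite level-aware conflict graph, there exists a unique First-UIP: a UIP u such that no other UIP is reachable from u by a directed path. -/

import Mathlib

inductive Lit (V : Type) where
  | pos : V → Lit V
  | neg : V → Lit V
deriving DecidableEq

def Lit.compl {V : Type} : Lit V → Lit V
  | .pos v => .neg v
  | .neg v => .pos v

/-- `l` is a (directed) path from `a` to `b` along the edge relation `E`. -/
def IsPath {α : Type} (E : α → α → Prop) (l : List α) (a b : α) : Prop :=
  l.Chain' E ∧ l.head? = some a ∧ l.getLast? = some b

/-- A UIP for the conflict level: a node through which every path from the
decision literal `σd` to a conflicting literal passes. -/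
def IsUIP {V : Type} (nodes : Finset (Lit V)) (E : Lit V → Lit V → Prop)
    (σ σd u : Lit V) : Prop :=
  u ∈ nodes ∧
  ∀ (l : List (Lit V)) (c : Lit V), (c = σ ∨ c = Lit.compl σ) →
    IsPath E l σd c → u ∈ l

lemma chain'_transGen {α : Type} {E : α → α → Prop} {l : List α}
    (h : l.Chain' E) {i j : ℕ} (hij : i < j) (hj : j < l.length) :
    Relation.TransGen E (l[i]'(lt_trans hij hj)) (l[j]'hj) := by
  induction j with
  | zero => omega
  | succ j ih =>
    have hstep : E (l[j]'(by omega)) (l[j+1]'hj) := by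
      have := List.isChain_iff_getElem.mp h j (by omega)
      simpa using this
    rcases Nat.lt_or_ge i j with h' | h'
    · exact (ih h' (by omega)).tail hstep
    · have : i = j := by omega
      subst this
      exact Relation.TransGen.single hstep

lemma exists_path {α : Type} {E : α → α → Prop} {a b : α}
    (h : Relation.ReflTransGen E a b) : ∃ l, IsPath E l a b := by
  induction h with
  | refl => exact ⟨[a], List.isChain_singleton a, rfl, rfl⟩
  | @tail m c hab hbc ih =>
    obtain ⟨l, hch, hh, hl⟩ := ih
    refine ⟨l ++ [c], ?_, ?_, ?_⟩
    · show List.IsChain E (l ++ [c])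
      rw [List.isChain_append]
      refine ⟨hch, List.isChain_singleton c, ?_⟩
      intro x hx y hy
      simp only [List.head?_cons, Option.mem_some_iff] at hy
      rw [hl] at hx
      simp only [Option.mem_some_iff] at hx
      subst hx; subst hy; exact hbc
    · have : l ≠ [] := by rintro rfl; simp at hh
      rw [List.head?_append_of_ne_nil _ this]  -- guess name
      exact hh
    · simp


/-- a finite level-aware conflict graph has a unique First-UIP:
a UIP `u` from which no other UIP is reachable by a directed path. -/
theorem stmt12 {V : Type} [DecidableEq V]
    (nodes : Finset (Lit V)) (E : Lit V → Lit V → Prop) (dl : Lit V → ℕ)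
    (σ σd : Lit V)
    (hσ : σ ∈ nodes) (hσc : σ.compl ∈ nodes) (hσd : σd ∈ nodes)
    (hE : ∀ a b, E a b → a ∈ nodes ∧ b ∈ nodes)
    (hacyc : ∀ a, ¬ Relation.TransGen E a a)
    (hdlσd : dl σd = dl σ) (hdlσc : dl σ.compl = dl σ)
    (hσne : σ ≠ σd) (hσcne : σ.compl ≠ σd)
    (hdec : ∀ a, ¬ E a σd)
    -- level-awareness
    (hla : (∃ p, E p σ ∧ dl p = dl σ) ∧ (∃ p, E p σ.compl ∧ dl p = dl σ))
    -- both conflicting literals are reachable from the decision literal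
    (hreach : Relation.ReflTransGen E σd σ ∧ Relation.ReflTransGen E σd σ.compl) :
    ∃! u : Lit V, IsUIP nodes E σ σd u ∧
      ∀ v : Lit V, IsUIP nodes E σ σd v → v ≠ u → ¬ Relation.TransGen E u v := by
  classical
  obtain ⟨l, hchain, hhead, hlast⟩ := exists_path hreach.1
  have hlpos : 0 < l.length := by
    cases l with
    | nil => simp at hhead
    | cons x xs => simp
  have hl0 : l[0]'hlpos = σd := by
    cases l with
    | nil => simp at hhead
    | cons x xs => simpa using hhead
  have hmem_uip : ∀ v, IsUIP nodes E σ σd v → v ∈ l := fun v hv =>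
    hv.2 l σ (Or.inl rfl) ⟨hchain, hhead, hlast⟩
  have hσduip : IsUIP nodes E σ σd σd := by
    refine ⟨hσd, fun l' c hc hp => ?_⟩
    obtain ⟨_, hh', _⟩ := hp
    cases l' with
    | nil => simp at hh'
    | cons x xs =>
      simp only [List.head?_cons, Option.some.injEq] at hh'
      subst hh'
      exact List.mem_cons_self
  set P : ℕ → Prop := fun i => i < l.length ∧ IsUIP nodes E σ σd (l.getD i σd)
    with hPdef
  have hP0 : P 0 := ⟨hlpos, by rw [List.getD_eq_getElem _ _ hlpos, hl0]; exact hσduip⟩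
  set i := Nat.findGreatest P l.length with hidef
  have hPi : P i := Nat.findGreatest_spec (Nat.zero_le _) hP0
  set u := l.getD i σd with hudef
  have hu_getElem : u = l[i]'hPi.1 := List.getD_eq_getElem _ _ hPi.1
  have key : ∀ v, IsUIP nodes E σ σd v → v ≠ u → Relation.TransGen E v u := by
    intro v hv hne
    obtain ⟨j, hj, hjv⟩ := List.mem_iff_getElem.mp (hmem_uip v hv)
    have hPj : P j := ⟨hj, by rw [List.getD_eq_getElem _ _ hj, hjv]; exact hv⟩
    have hji : j ≤ i := Nat.le_findGreatest (le_of_lt hj) hPj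
    have hji' : j < i := by
      rcases lt_or_eq_of_le hji with h' | h'
      · exact h'
      · exfalso; apply hne; subst h'; rw [hu_getElem, ← hjv]
    have := chain'_transGen hchain hji' hPi.1
    rwa [hjv, ← hu_getElem] at this
  refine ⟨u, ⟨hPi.2, fun v hv hne htg => ?_⟩, ?_⟩
  · exact hacyc u (htg.trans (key v hv hne))
  · intro u' ⟨hu'1, hu'2⟩
    by_contra hne
    exact hu'2 u hPi.2 (Ne.symm hne) (key u' hu'1 hne)
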